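/- Let K = ℚ(ε) and let P = K[t^{α,p} : α ∈ {1,2}, p ∈ ℕ]. For every integer m ≥ 1, the operators L_{-1} and L_m defined below satisfy the Virasoro commutation relation [L_{-1}, L_m] = −(m+1)·L_{m−1} as K-linear endomorphisms of P. -/

import Mathlib

/-!
Virasoro operators of the extended Toda hierarchy acting on the polynomial
algebra `P = K[t^{α,p}]`, `K = ℚ(ε)`.  Variables are indexed by
`(a, p) : Fin 2 × ℕ` where `a = 0` corresponds to `α = 1` and `a = 1` to `α = 2`.
-/

open MvPolynomial

noncomputable section ExtendedToda

abbrev K : Type := RatFunc ℚ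

abbrev P : Type := MvPolynomial (Fin 2 × ℕ) K

/-- The indeterminate `ε`. -/
def eps : K := RatFunc.X

/-- The coupling variable `t^{α,p}` (with `α = 1` encoded as `0`, `α = 2` as `1`). -/
def t (a : Fin 2) (p : ℕ) : P := X (a, p)

/-- The partial derivative `∂/∂t^{α,p}`. -/
def pd (a : Fin 2) (p : ℕ) (q : P) : P := pderiv (a, p) q

/-- `L_{-1} = Σ_{k≥1} Σ_α t^{α,k} ∂/∂t^{α,k−1} + ε^{−2} t^{1,0} t^{2,0}`
(the sum over `k ≥ 1` is written with `k` shifted by one). -/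
def Lneg1 (q : P) : P :=
  (∑ᶠ k : ℕ, (t 0 (k + 1) * pd 0 k q + t 1 (k + 1) * pd 1 k q))
    + eps⁻¹ ^ 2 • (t 0 0 * t 1 0 * q)

/-- `L_0 = Σ_{k≥1} k (t^{1,k} ∂_{1,k} + t^{2,k−1} ∂_{2,k−1}) + 2 Σ_{k≥1} t^{1,k} ∂_{2,k−1}
+ ε^{−2} (t^{1,0})²` (sums written with `k` shifted by one). -/
def L0 (q : P) : P :=
  (∑ᶠ k : ℕ, (((k : K) + 1) • (t 0 (k + 1) * pd 0 (k + 1) q + t 1 k * pd 1 k q)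
      + (2 : K) • (t 0 (k + 1) * pd 1 k q)))
    + eps⁻¹ ^ 2 • (t 0 0 * t 0 0 * q)

/-- The coefficients `α_m(k)`: `α_m(0) = m!` and
`α_m(k) = ((m+k)!/(k−1)!) Σ_{j=k}^{m+k} 1/j` for `k ≥ 1`. -/
def alphaC (m k : ℕ) : ℚ :=
  if k = 0 then (Nat.factorial m : ℚ)
  else ((Nat.factorial (m + k)) : ℚ) / ((Nat.factorial (k - 1)) : ℚ) * ∑ j ∈ Finset.Icc k (m + k), (1 : ℚ) / (j : ℚ)

/-- For `m ≥ 1`, the operator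
`L_m = ε² Σ_{k=1}^{m−1} k! (m−k)! ∂²/∂t^{2,k−1}∂t^{2,m−k−1}
 + Σ_{k≥1} ((m+k)!/(k−1)!) (t^{1,k} ∂_{1,m+k} + t^{2,k−1} ∂_{2,m+k−1})
 + 2 Σ_{k≥0} α_m(k) t^{1,k} ∂_{2,m+k−1}`
(the infinite sum over `k ≥ 1` is written with `k` shifted by one, the finite sum
over `1 ≤ k ≤ m−1` likewise, and `m+k−1` is written as `m−1+k`). -/
def Lpos (m : ℕ) (q : P) : P :=
  eps ^ 2 • (∑ k ∈ Finset.range (m - 1),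
      (((Nat.factorial (k + 1) * Nat.factorial (m - k - 1) : ℕ) : K) • pd 1 k (pd 1 (m - k - 2) q)))
  + (∑ᶠ k : ℕ, (((Nat.factorial (m + k + 1) : ℚ) / (Nat.factorial k : ℚ) : ℚ) : K) •
      (t 0 (k + 1) * pd 0 (m + k + 1) q + t 1 k * pd 1 (m + k) q))
  + (∑ᶠ k : ℕ, ((2 * alphaC m k : ℚ) : K) • (t 0 k * pd 1 (m - 1 + k) q))

/-- The family `L_0, L_1, L_2, …` of Virasoro operators. -/
def Lfam : ℕ → P → P
  | 0 => L0
  | (m + 1) => Lpos (m + 1)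

/-! ### Auxiliary infrastructure -/

open Finset

lemma pd_add (a : Fin 2) (p : ℕ) (x y : P) : pd a p (x + y) = pd a p x + pd a p y :=
  map_add _ _ _

lemma pd_zero (a : Fin 2) (p : ℕ) : pd a p (0 : P) = 0 := map_zero _

lemma pd_smul (a : Fin 2) (p : ℕ) (c : K) (x : P) : pd a p (c • x) = c • pd a p x :=
  Derivation.map_smul _ _ _

lemma pd_sum (a : Fin 2) (p : ℕ) (s : Finset ℕ) (f : ℕ → P) :
    pd a p (∑ k ∈ s, f k) = ∑ k ∈ s, pd a p (f k) := by
  classical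
  induction s using Finset.induction_on with
  | empty => simp [pd_zero]
  | insert _ _ h ih => rw [Finset.sum_insert h, Finset.sum_insert h, pd_add, ih]

lemma pd_t (a : Fin 2) (i : ℕ) (b : Fin 2) (j : ℕ) :
    pd b j (t a i) = if (a, i) = (b, j) then 1 else 0 := by
  rw [pd, t, pderiv_X, Pi.single_apply]

lemma pd_mul_t (a : Fin 2) (i : ℕ) (b : Fin 2) (j : ℕ) (x : P) :
    pd b j (t a i * x) = (if (a, i) = (b, j) then x else 0) + t a i * pd b j x := by
  show pderiv (b,j) (t a i * x) = _
  rw [pderiv_mul]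
  have : pderiv (b,j) (t a i) = pd b j (t a i) := rfl
  rw [this, pd_t, ite_mul, one_mul, zero_mul]
  rfl

lemma pd_comm (a : Fin 2) (p : ℕ) (b : Fin 2) (r : ℕ) (x : P) :
    pd a p (pd b r x) = pd b r (pd a p x) := by
  show pderiv (a,p) (pderiv (b,r) x) = pderiv (b,r) (pderiv (a,p) x)
  induction x using MvPolynomial.induction_on' with
  | add f g hf hg => rw [map_add, map_add, hf, hg, map_add, map_add]
  | monomial s c =>
      by_cases h : (a,p) = (b,r)
      · rw [h]
      · simp only [pderiv_monomial]
        rw [Finsupp.tsub_apply, Finsupp.tsub_apply]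
        have h1 : Finsupp.single (b,r) 1 (a,p) = 0 :=
          Finsupp.single_eq_of_ne (by exact fun hh => h hh)
        have h2 : Finsupp.single (a,p) 1 (b,r) = 0 := Finsupp.single_eq_of_ne (fun hh => h hh.symm)
        rw [h1, h2, Nat.sub_zero, Nat.sub_zero]
        have h3 : s - Finsupp.single (b,r) 1 - Finsupp.single (a,p) 1
            = s - Finsupp.single (a,p) 1 - Finsupp.single (b,r) 1 := by
          rw [tsub_tsub, tsub_tsub, add_comm]
        rw [h3]
        ring_nf

/-! ### bounds on occurring variables -/

def Bnd (N : ℕ) (r : P) : Prop := ∀ (a : Fin 2) (p : ℕ), N ≤ p → pd a p r = 0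

lemma exists_bnd (r : P) : ∃ N, Bnd N r := by
  refine ⟨(r.vars.sup (fun i => i.2)) + 1, fun a p hp => ?_⟩
  apply pderiv_eq_zero_of_notMem_vars
  intro h
  have := Finset.le_sup (f := fun i : Fin 2 × ℕ => i.2) h
  simp only at this
  omega

lemma Bnd.mono {N N' : ℕ} {r : P} (h : Bnd N r) (hle : N ≤ N') : Bnd N' r :=
  fun a p hp => h a p (le_trans hle hp)

lemma Bnd.pd {N : ℕ} {r : P} (h : Bnd N r) (b : Fin 2) (j : ℕ) : Bnd N (pd b j r) :=
  fun a p hp => by rw [pd_comm, h a p hp, pd_zero]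

lemma Bnd.add {N : ℕ} {x y : P} (hx : Bnd N x) (hy : Bnd N y) : Bnd N (x + y) :=
  fun a p hp => by rw [pd_add, hx a p hp, hy a p hp, add_zero]

lemma Bnd.smul {N : ℕ} {x : P} (hx : Bnd N x) (c : K) : Bnd N (c • x) :=
  fun a p hp => by rw [pd_smul, hx a p hp, smul_zero]

lemma Bnd.mul_t {N : ℕ} {x : P} (hx : Bnd N x) (a : Fin 2) (i : ℕ) (hi : i < N) :
    Bnd N (t a i * x) := by
  intro c p hp
  rw [pd_mul_t, hx c p hp, mul_zero, add_zero, if_neg]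
  intro hh
  have : i = p := ((Prod.mk.injEq _ _ _ _).mp hh).2
  omega

/-! ### the pieces of the operators -/

def Sop (r : P) : P := ∑ᶠ k : ℕ, (t 0 (k + 1) * pd 0 k r + t 1 (k + 1) * pd 1 k r)

def Mop (r : P) : P := eps⁻¹ ^ 2 • (t 0 0 * t 1 0 * r)

def M0op (r : P) : P := eps⁻¹ ^ 2 • (t 0 0 * t 0 0 * r)

def Qop (m : ℕ) (r : P) : P :=
  eps ^ 2 • (∑ k ∈ Finset.range (m - 1),
      (((Nat.factorial (k + 1) * Nat.factorial (m - k - 1) : ℕ) : K) • pd 1 k (pd 1 (m - k - 2) r)))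

def Bop (m : ℕ) (r : P) : P :=
  ∑ᶠ k : ℕ, (((Nat.factorial (m + k + 1) : ℚ) / (Nat.factorial k : ℚ) : ℚ) : K) •
      (t 0 (k + 1) * pd 0 (m + k + 1) r + t 1 k * pd 1 (m + k) r)

def Aop (m : ℕ) (r : P) : P :=
  ∑ᶠ k : ℕ, ((2 * alphaC m k : ℚ) : K) • (t 0 k * pd 1 (m - 1 + k) r)

def B0op (r : P) : P :=
  ∑ᶠ k : ℕ, ((k : K) + 1) • (t 0 (k + 1) * pd 0 (k + 1) r + t 1 k * pd 1 k r)

def A0op (r : P) : P := ∑ᶠ k : ℕ, (2 : K) • (t 0 (k + 1) * pd 1 k r)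

lemma Lneg1_eq (q : P) : Lneg1 q = Sop q + Mop q := rfl

lemma Lpos_eq (m : ℕ) (q : P) : Lpos m q = Qop m q + Bop m q + Aop m q := rfl

/-! ### finite-sum representations -/

lemma finsum_eq_range {f : ℕ → P} {N : ℕ} (h : ∀ k, N ≤ k → f k = 0) :
    ∑ᶠ k, f k = ∑ k ∈ range N, f k := by
  apply finsum_eq_sum_of_support_subset
  intro k hk
  simp only [Finset.coe_range, Set.mem_Iio]
  by_contra hN
  exact hk (h k (by omega))

lemma Sop_eq {N : ℕ} {r : P} (h : Bnd N r) :
    Sop r = ∑ k ∈ range N, (t 0 (k + 1) * pd 0 k r + t 1 (k + 1) * pd 1 k r) :=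
  finsum_eq_range (fun k hk => by rw [h 0 k hk, h 1 k hk, mul_zero, mul_zero, add_zero])

lemma Bop_eq {N : ℕ} (m : ℕ) {r : P} (h : Bnd N r) :
    Bop m r = ∑ k ∈ range N, (((Nat.factorial (m + k + 1) : ℚ) / (Nat.factorial k : ℚ) : ℚ) : K) •
      (t 0 (k + 1) * pd 0 (m + k + 1) r + t 1 k * pd 1 (m + k) r) :=
  finsum_eq_range (fun k hk => by
    rw [h 0 (m + k + 1) (by omega), h 1 (m + k) (by omega), mul_zero, mul_zero, add_zero,
      smul_zero])

lemma Aop_eq {N : ℕ} (m : ℕ) {r : P} (h : Bnd N r) :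
    Aop m r = ∑ k ∈ range N, ((2 * alphaC m k : ℚ) : K) • (t 0 k * pd 1 (m - 1 + k) r) :=
  finsum_eq_range (fun k hk => by
    rw [h 1 (m - 1 + k) (by omega), mul_zero, smul_zero])

lemma B0op_eq {N : ℕ} {r : P} (h : Bnd N r) :
    B0op r = ∑ k ∈ range N, ((k : K) + 1) • (t 0 (k + 1) * pd 0 (k + 1) r + t 1 k * pd 1 k r) :=
  finsum_eq_range (fun k hk => by
    rw [h 0 (k + 1) (by omega), h 1 k hk, mul_zero, mul_zero, add_zero, smul_zero])

lemma A0op_eq {N : ℕ} {r : P} (h : Bnd N r) :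
    A0op r = ∑ k ∈ range N, (2 : K) • (t 0 (k + 1) * pd 1 k r) :=
  finsum_eq_range (fun k hk => by rw [h 1 k hk, mul_zero, smul_zero])

lemma L0_eq (q : P) : L0 q = B0op q + A0op q + M0op q := by
  obtain ⟨N, h⟩ := exists_bnd q
  show (∑ᶠ k : ℕ, (((k : K) + 1) • (t 0 (k + 1) * pd 0 (k + 1) q + t 1 k * pd 1 k q)
      + (2 : K) • (t 0 (k + 1) * pd 1 k q))) + M0op q = _
  rw [finsum_eq_range (N := N) (fun k hk => by
    simp [h 0 (k + 1) (by omega : N ≤ k + 1), h 1 k hk]),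
    Finset.sum_add_distrib, B0op_eq h, A0op_eq h]

/-! ### linearity -/

lemma Sop_zero : Sop (0 : P) = 0 := by
  rw [Sop_eq (N := 0) (fun a p _ => pd_zero a p), Finset.range_zero, Finset.sum_empty]

lemma Sop_add (x y : P) : Sop (x + y) = Sop x + Sop y := by
  obtain ⟨N1, h1⟩ := exists_bnd x
  obtain ⟨N2, h2⟩ := exists_bnd y
  have hx : Bnd (N1 + N2) x := h1.mono (by omega)
  have hy : Bnd (N1 + N2) y := h2.mono (by omega)
  rw [Sop_eq (hx.add hy), Sop_eq hx, Sop_eq hy, ← Finset.sum_add_distrib]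
  refine Finset.sum_congr rfl (fun k _ => ?_)
  rw [pd_add, pd_add]
  ring

lemma Sop_smul (c : K) (x : P) : Sop (c • x) = c • Sop x := by
  obtain ⟨N, h⟩ := exists_bnd x
  rw [Sop_eq (h.smul c), Sop_eq h, Finset.smul_sum]
  refine Finset.sum_congr rfl (fun k _ => ?_)
  rw [pd_smul, pd_smul, mul_smul_comm, mul_smul_comm, smul_add]

lemma Sop_sum (s : Finset ℕ) (f : ℕ → P) : Sop (∑ k ∈ s, f k) = ∑ k ∈ s, Sop (f k) := by
  classical
  induction s using Finset.induction_on with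
  | empty => simp [Sop_zero]
  | insert _ _ h ih => rw [Finset.sum_insert h, Finset.sum_insert h, Sop_add, ih]

lemma Mop_add (x y : P) : Mop (x + y) = Mop x + Mop y := by
  unfold Mop; rw [mul_add, smul_add]

lemma Mop_zero : Mop (0 : P) = 0 := by unfold Mop; rw [mul_zero, smul_zero]

lemma Mop_smul (c : K) (x : P) : Mop (c • x) = c • Mop x := by
  unfold Mop; rw [mul_smul_comm, smul_comm]

lemma Mop_mul (y x : P) : Mop (y * x) = y * Mop x := by
  unfold Mop; rw [mul_smul_comm]; congr 1; ring

lemma Mop_sum (s : Finset ℕ) (f : ℕ → P) : Mop (∑ k ∈ s, f k) = ∑ k ∈ s, Mop (f k) := by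
  classical
  induction s using Finset.induction_on with
  | empty => simp [Mop_zero]
  | insert _ _ h ih => rw [Finset.sum_insert h, Finset.sum_insert h, Mop_add, ih]

lemma Qop_add (m : ℕ) (x y : P) : Qop m (x + y) = Qop m x + Qop m y := by
  unfold Qop
  rw [← smul_add, ← Finset.sum_add_distrib]
  congr 1
  refine Finset.sum_congr rfl (fun k _ => ?_)
  rw [pd_add, pd_add, smul_add]

lemma Bop_add (m : ℕ) (x y : P) : Bop m (x + y) = Bop m x + Bop m y := by
  obtain ⟨N1, h1⟩ := exists_bnd x
  obtain ⟨N2, h2⟩ := exists_bnd y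
  have hx : Bnd (N1 + N2) x := h1.mono (by omega)
  have hy : Bnd (N1 + N2) y := h2.mono (by omega)
  rw [Bop_eq m (hx.add hy), Bop_eq m hx, Bop_eq m hy, ← Finset.sum_add_distrib]
  refine Finset.sum_congr rfl (fun k _ => ?_)
  rw [pd_add, pd_add, ← smul_add]
  congr 1
  ring

lemma Aop_add (m : ℕ) (x y : P) : Aop m (x + y) = Aop m x + Aop m y := by
  obtain ⟨N1, h1⟩ := exists_bnd x
  obtain ⟨N2, h2⟩ := exists_bnd y
  have hx : Bnd (N1 + N2) x := h1.mono (by omega)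
  have hy : Bnd (N1 + N2) y := h2.mono (by omega)
  rw [Aop_eq m (hx.add hy), Aop_eq m hx, Aop_eq m hy, ← Finset.sum_add_distrib]
  refine Finset.sum_congr rfl (fun k _ => ?_)
  rw [pd_add, ← smul_add]
  congr 1
  ring

/-! ### commutation workers -/

lemma Sop_mul (a : Fin 2) (i : ℕ) (x : P) :
    Sop (t a i * x) = t a (i + 1) * x + t a i * Sop x := by
  obtain ⟨N, h⟩ := exists_bnd x
  have hx : Bnd (N + i + 1) x := h.mono (by omega)
  have hbig : Bnd (N + i + 1) (t a i * x) := hx.mul_t a i (by omega)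
  rw [Sop_eq hbig, Sop_eq hx]
  have key : ∀ k ∈ range (N + i + 1),
      t 0 (k + 1) * pd 0 k (t a i * x) + t 1 (k + 1) * pd 1 k (t a i * x)
      = ((if a = 0 ∧ i = k then t 0 (k + 1) * x else 0)
          + (if a = 1 ∧ i = k then t 1 (k + 1) * x else 0))
        + (t a i * (t 0 (k + 1) * pd 0 k x + t 1 (k + 1) * pd 1 k x)) := by
    intro k _
    rw [pd_mul_t, pd_mul_t]
    simp only [Prod.mk.injEq, mul_add, mul_ite, mul_zero]
    ring
  rw [Finset.sum_congr rfl key, Finset.sum_add_distrib, ← Finset.mul_sum]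
  congr 1
  have hmem : i ∈ range (N + i + 1) := Finset.mem_range.mpr (by omega)
  fin_cases a <;> simp [Finset.sum_add_distrib, Finset.sum_ite_eq, hmem]

lemma pd_Sop (b : Fin 2) (j : ℕ) (r : P) :
    pd b j (Sop r) = Sop (pd b j r) + (if j = 0 then 0 else pd b (j - 1) r) := by
  obtain ⟨N, h⟩ := exists_bnd r
  have hr : Bnd (N + j + 1) r := h.mono (by omega)
  rw [Sop_eq hr, Sop_eq (hr.pd b j), pd_sum]
  have key : ∀ k ∈ range (N + j + 1),
      pd b j (t 0 (k + 1) * pd 0 k r + t 1 (k + 1) * pd 1 k r)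
      = ((if 0 = b ∧ k + 1 = j then pd 0 k r else 0)
          + (if 1 = b ∧ k + 1 = j then pd 1 k r else 0))
        + (t 0 (k + 1) * pd 0 k (pd b j r) + t 1 (k + 1) * pd 1 k (pd b j r)) := by
    intro k _
    rw [pd_add, pd_mul_t, pd_mul_t, pd_comm b j 0 k, pd_comm b j 1 k]
    simp only [Prod.mk.injEq]
    ring
  rw [Finset.sum_congr rfl key, Finset.sum_add_distrib, add_comm]
  congr 1
  cases j with
  | zero => simp
  | succ j' =>
      have hmem : j' ∈ range (N + (j' + 1) + 1) := Finset.mem_range.mpr (by omega)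
      fin_cases b <;>
        simp [Finset.sum_add_distrib, Finset.sum_ite_eq, Finset.sum_ite_eq', hmem, Nat.succ_inj]

lemma pd_Mop {a : Fin 2} {j : ℕ} (hj : j ≠ 0) (r : P) : pd a j (Mop r) = Mop (pd a j r) := by
  unfold Mop
  have h1 : ((0 : Fin 2), (0 : ℕ)) ≠ (a, j) := fun h => hj (congrArg Prod.snd h).symm
  have h2 : ((1 : Fin 2), (0 : ℕ)) ≠ (a, j) := fun h => hj (congrArg Prod.snd h).symm
  rw [pd_smul, mul_assoc, pd_mul_t, if_neg h1, pd_mul_t, if_neg h2, zero_add, zero_add,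
    mul_assoc]

lemma pd10_Mop (r : P) : pd 1 0 (Mop r) = Mop (pd 1 0 r) + eps⁻¹ ^ 2 • (t 0 0 * r) := by
  unfold Mop
  have h1 : ((0 : Fin 2), (0 : ℕ)) ≠ ((1 : Fin 2), (0 : ℕ)) := by decide
  rw [pd_smul, mul_assoc, pd_mul_t, if_neg h1, zero_add, pd_mul_t, if_pos rfl, mul_add,
    smul_add, mul_assoc, add_comm]

lemma pd1_t00smul (j : ℕ) (r : P) :
    pd 1 j (eps⁻¹ ^ 2 • (t 0 0 * r)) = eps⁻¹ ^ 2 • (t 0 0 * pd 1 j r) := by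
  have h1 : ((0 : Fin 2), (0 : ℕ)) ≠ ((1 : Fin 2), j) := fun h =>
    absurd ((Prod.mk.injEq _ _ _ _).mp h).1 (by decide)
  rw [pd_smul, pd_mul_t, if_neg h1, zero_add]

lemma pdpd_Mop (j j' : ℕ) (r : P) :
    pd 1 j (pd 1 j' (Mop r)) = Mop (pd 1 j (pd 1 j' r))
      + eps⁻¹ ^ 2 • (t 0 0 * ((if j' = 0 then pd 1 j r else 0)
          + (if j = 0 then pd 1 j' r else 0))) := by
  cases j' with
  | zero =>
      rw [pd10_Mop, pd_add, pd1_t00smul]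
      cases j with
      | zero =>
          rw [pd10_Mop]
          simp only [if_pos rfl]
          rw [mul_add, smul_add]
          abel
      | succ j0 =>
          rw [pd_Mop (Nat.succ_ne_zero j0)]
          simp
  | succ j0' =>
      rw [pd_Mop (Nat.succ_ne_zero j0')]
      cases j with
      | zero =>
          rw [pd10_Mop]
          simp
      | succ j0 =>
          rw [pd_Mop (Nat.succ_ne_zero j0)]
          simp only [if_neg (Nat.succ_ne_zero j0'), if_neg (Nat.succ_ne_zero j0), add_zero,
            mul_zero, smul_zero]


/-! ### coefficient identities -/

instance : CharZero K := charZero_of_injective_algebraMap (algebraMap ℚ K).injective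

lemma hfacQ (j : ℕ) : (Nat.factorial j : ℚ) ≠ 0 :=
  Nat.cast_ne_zero.mpr (Nat.factorial_ne_zero j)

lemma alphaC_zero_succ (k : ℕ) : alphaC 0 (k + 1) = 1 := by
  unfold alphaC
  rw [if_neg (Nat.succ_ne_zero k)]
  rw [show 0 + (k+1) = k + 1 from by omega, Nat.succ_sub_one, Finset.Icc_self,
    Finset.sum_singleton, Nat.factorial_succ]
  have h1 : (Nat.factorial k : ℚ) ≠ 0 := hfacQ k
  have h2 : ((k:ℚ) + 1) ≠ 0 := by positivity
  push_cast
  field_simp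

lemma alpha_idG (n i : ℕ) :
    alphaC (n + 1) i - alphaC (n + 1) (i + 1) = -((n : ℚ) + 2) * alphaC n (i + 1) := by
  cases i with
  | zero =>
      unfold alphaC
      rw [if_pos rfl, if_neg (Nat.succ_ne_zero 0), if_neg (Nat.succ_ne_zero 0)]
      rw [show n + 1 + (0 + 1) = (n + 1) + 1 from by omega, Nat.succ_sub_one,
        show n + (0 + 1) = n + 1 from by omega]
      rw [Finset.sum_Icc_succ_top (show 1 ≤ (n + 1) + 1 by omega), Nat.factorial_succ (n + 1)]
      have h1 : (Nat.factorial (n + 1) : ℚ) ≠ 0 := hfacQ (n + 1)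
      have h2 : ((n : ℚ) + 2) ≠ 0 := by positivity
      rw [Nat.factorial_zero]
      push_cast
      field_simp
      ring
  | succ i0 =>
      unfold alphaC
      rw [if_neg (Nat.succ_ne_zero _), if_neg (Nat.succ_ne_zero _), if_neg (Nat.succ_ne_zero _)]
      rw [Nat.succ_sub_one, Nat.succ_sub_one]
      rw [show n + 1 + (i0 + 1) = n + i0 + 2 from by omega,
        show n + 1 + (i0 + 1 + 1) = n + i0 + 3 from by omega,
        show n + (i0 + 1 + 1) = n + i0 + 2 from by omega]
      rw [show n + i0 + 3 = (n + i0 + 2) + 1 from rfl]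
      rw [Finset.sum_Icc_succ_top (show i0 + 1 + 1 ≤ (n + i0 + 2) + 1 by omega)]
      have hsplit : Finset.Icc (i0 + 1) (n + i0 + 2)
          = insert (i0 + 1) (Finset.Icc (i0 + 1 + 1) (n + i0 + 2)) := by
        ext x
        simp only [Finset.mem_Icc, Finset.mem_insert]
        omega
      rw [hsplit, Finset.sum_insert (by simp only [Finset.mem_Icc]; omega)]
      rw [Nat.factorial_succ (n + i0 + 2), Nat.factorial_succ i0]
      have h1 : (Nat.factorial i0 : ℚ) ≠ 0 := hfacQ i0
      have h2 : ((i0 : ℚ) + 1) ≠ 0 := by positivity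
      have h3 : ((n : ℚ) + (i0 : ℚ) + 3) ≠ 0 := by positivity
      push_cast
      field_simp
      ring

lemma ite_cast (c : Prop) [Decidable c] (x : ℚ) :
    (if c then (0 : K) else ((x : ℚ) : K)) = (((if c then (0 : ℚ) else x) : ℚ) : K) := by
  split_ifs <;> simp

lemma cB_id (M k : ℕ) :
    (if k = 0 then (0 : K)
        else (((Nat.factorial (M + (k - 1) + 2) : ℚ) / (Nat.factorial (k - 1) : ℚ) : ℚ) : K))
      - (((Nat.factorial (M + k + 2) : ℚ) / (Nat.factorial k : ℚ) : ℚ) : K)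
    = (-((M : K) + 2)) * (((Nat.factorial (M + k + 1) : ℚ) / (Nat.factorial k : ℚ) : ℚ) : K) := by
  have hQ : (if k = 0 then (0 : ℚ)
        else ((Nat.factorial (M + (k - 1) + 2) : ℚ) / (Nat.factorial (k - 1) : ℚ)))
      - ((Nat.factorial (M + k + 2) : ℚ) / (Nat.factorial k : ℚ))
    = (-((M : ℚ) + 2)) * ((Nat.factorial (M + k + 1) : ℚ) / (Nat.factorial k : ℚ)) := by
    cases k with
    | zero =>
        rw [if_pos rfl]
        rw [show M + 0 + 2 = (M + 0 + 1) + 1 from rfl, Nat.factorial_succ (M + 0 + 1),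
          Nat.factorial_zero]
        push_cast
        ring
    | succ j =>
        rw [if_neg (Nat.succ_ne_zero j), Nat.succ_sub_one]
        rw [show M + (j + 1) + 2 = (M + j + 2) + 1 from by omega,
          show M + (j + 1) + 1 = M + j + 2 from by omega,
          Nat.factorial_succ (M + j + 2), Nat.factorial_succ j]
        have h1 : (Nat.factorial j : ℚ) ≠ 0 := hfacQ j
        have h2 : ((j : ℚ) + 1) ≠ 0 := by positivity
        push_cast
        field_simp
        ring
  rw [ite_cast, ← Rat.cast_sub, hQ, Rat.cast_mul]
  push_cast
  ring

lemma cA_id (m k : ℕ) :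
    (if k = 0 then (0 : K) else ((2 * alphaC (m + 2) (k - 1) : ℚ) : K))
      - ((2 * alphaC (m + 2) k : ℚ) : K)
    = (-((m : K) + 3)) * ((2 * alphaC (m + 1) k : ℚ) : K)
      + (if k = 0 then ((2 * (Nat.factorial (m + 1) : ℚ) : ℚ) : K) else 0) := by
  have hQ : (if k = 0 then (0 : ℚ) else 2 * alphaC (m + 2) (k - 1)) - 2 * alphaC (m + 2) k
      = -((m : ℚ) + 3) * (2 * alphaC (m + 1) k)
        + (if k = 0 then 2 * (Nat.factorial (m + 1) : ℚ) else 0) := by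
    cases k with
    | zero =>
        rw [if_pos rfl, if_pos rfl]
        have e1 : alphaC (m + 2) 0 = (Nat.factorial (m + 2) : ℚ) := by
          unfold alphaC; rw [if_pos rfl]
        have e2 : alphaC (m + 1) 0 = (Nat.factorial (m + 1) : ℚ) := by
          unfold alphaC; rw [if_pos rfl]
        rw [e1, e2, show m + 2 = (m + 1) + 1 from rfl, Nat.factorial_succ (m + 1)]
        push_cast
        ring
    | succ j =>
        rw [if_neg (Nat.succ_ne_zero j), if_neg (Nat.succ_ne_zero j), Nat.succ_sub_one,
          add_zero]
        have h := alpha_idG (m + 1) j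
        rw [show m + 1 + 1 = m + 2 from rfl] at h
        push_cast at h ⊢
        linear_combination 2 * h
  rw [ite_cast, ← Rat.cast_sub, hQ, Rat.cast_add, Rat.cast_mul]
  have : ((if k = 0 then 2 * (Nat.factorial (m + 1) : ℚ) else 0 : ℚ) : K)
      = (if k = 0 then ((2 * (Nat.factorial (m + 1) : ℚ) : ℚ) : K) else 0) := by
    split_ifs <;> simp
  rw [this]
  push_cast
  ring

lemma cA1_id (k : ℕ) :
    ((2 * alphaC 1 k : ℚ) : K) - ((2 * alphaC 1 (k + 1) : ℚ) : K) = (-(2 : K)) * (2 : K) := by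
  have h := alpha_idG 0 k
  rw [alphaC_zero_succ] at h
  rw [show (0 : ℕ) + 1 = 1 from rfl] at h
  rw [← Rat.cast_sub]
  rw [show (2 * alphaC 1 k - 2 * alphaC 1 (k + 1) : ℚ)
      = 2 * (alphaC 1 k - alphaC 1 (k + 1)) from by ring, h]
  norm_num

lemma cQ_id (M k : ℕ) (hk : k ≤ M) :
    Nat.factorial (k + 2) * Nat.factorial (M - k)
        + Nat.factorial (k + 1) * Nat.factorial (M + 1 - k)
      = (M + 3) * (Nat.factorial (k + 1) * Nat.factorial (M - k)) := by
  have h1 : M + 1 - k = (M - k) + 1 := by omega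
  rw [h1, Nat.factorial_succ (M - k), Nat.factorial_succ (k + 1)]
  have h2 : k + 2 + (M - k + 1) = M + 3 := by omega
  calc (k + 2) * Nat.factorial (k + 1) * Nat.factorial (M - k)
      + Nat.factorial (k + 1) * ((M - k + 1) * Nat.factorial (M - k))
      = (k + 2 + (M - k + 1)) * (Nat.factorial (k + 1) * Nat.factorial (M - k)) := by ring
    _ = _ := by rw [h2]


/-! ### normalized representations -/

lemma Qop_rep (M : ℕ) (r : P) :
    Qop (M + 2) r = eps ^ 2 • ∑ k ∈ range (M + 1),
      (((Nat.factorial (k + 1) * Nat.factorial (M + 1 - k) : ℕ) : K) •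
        pd 1 k (pd 1 (M - k) r)) := by
  unfold Qop
  rw [show M + 2 - 1 = M + 1 from rfl]
  congr 1
  refine Finset.sum_congr rfl fun k hk => ?_
  have hk' : k < M + 1 := Finset.mem_range.mp hk
  rw [show M + 2 - k - 1 = M + 1 - k from by omega, show M + 2 - k - 2 = M - k from by omega]

lemma Qop_rep' (M : ℕ) (q : P) :
    Qop (M + 1) q = eps ^ 2 • ∑ k ∈ range M,
      (((Nat.factorial (k + 1) * Nat.factorial (M - k) : ℕ) : K) •
        pd 1 k (pd 1 (M - k - 1) q)) := by
  unfold Qop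
  rw [show M + 1 - 1 = M from rfl]
  congr 1
  refine Finset.sum_congr rfl fun k hk => ?_
  have hk' : k < M := Finset.mem_range.mp hk
  rw [show M + 1 - k - 1 = M - k from by omega, show M + 1 - k - 2 = M - k - 1 from by omega]

lemma Aop_eq' {N : ℕ} (n : ℕ) {r : P} (h : Bnd N r) :
    Aop (n + 1) r = ∑ k ∈ range N,
      ((2 * alphaC (n + 1) k : ℚ) : K) • (t 0 k * pd 1 (n + k) r) := by
  rw [Aop_eq (n + 1) h]
  refine Finset.sum_congr rfl fun k _ => ?_
  rw [show n + 1 - 1 + k = n + k from by omega]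

lemma Qop_one (r : P) : Qop 1 r = 0 := by
  unfold Qop
  rw [show (1 : ℕ) - 1 = 0 from rfl, Finset.range_zero, Finset.sum_empty, smul_zero]

/-! ### commutator with the first-order part `Sop` : B-term -/

lemma commSB (M : ℕ) (q : P) :
    Sop (Bop (M + 1) q) - Bop (M + 1) (Sop q) = (-((M : K) + 2)) • Bop M q := by
  obtain ⟨N1, h1⟩ := exists_bnd q
  obtain ⟨N2, h2⟩ := exists_bnd (Sop q)
  have hq : Bnd (N1 + N2 + 1) q := h1.mono (by omega)
  have hs : Bnd (N1 + N2 + 1) (Sop q) := h2.mono (by omega)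
  set N : ℕ := N1 + N2 with hN
  rw [Bop_eq (M + 1) hq, Bop_eq (M + 1) hs, Bop_eq M hq]
  simp only [show ∀ k : ℕ, M + 1 + k = M + k + 1 from fun k => by omega]
  rw [Sop_sum, ← Finset.sum_sub_distrib]
  have step : ∀ k ∈ range (N + 1),
      Sop ((((Nat.factorial (M + k + 1 + 1) : ℚ) / (Nat.factorial k : ℚ) : ℚ) : K) •
          (t 0 (k + 1) * pd 0 (M + k + 1 + 1) q + t 1 k * pd 1 (M + k + 1) q))
        - (((Nat.factorial (M + k + 1 + 1) : ℚ) / (Nat.factorial k : ℚ) : ℚ) : K) •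
          (t 0 (k + 1) * pd 0 (M + k + 1 + 1) (Sop q) + t 1 k * pd 1 (M + k + 1) (Sop q))
      = (((Nat.factorial (M + k + 1 + 1) : ℚ) / (Nat.factorial k : ℚ) : ℚ) : K) •
          (t 0 (k + 2) * pd 0 (M + k + 1 + 1) q + t 1 (k + 1) * pd 1 (M + k + 1) q)
        - (((Nat.factorial (M + k + 1 + 1) : ℚ) / (Nat.factorial k : ℚ) : ℚ) : K) •
          (t 0 (k + 1) * pd 0 (M + k + 1) q + t 1 k * pd 1 (M + k) q) := by
    intro k _
    rw [Sop_smul, Sop_add, Sop_mul, Sop_mul, pd_Sop, pd_Sop,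
      if_neg (show ¬ M + k + 1 + 1 = 0 by omega), if_neg (show ¬ M + k + 1 = 0 by omega),
      show M + k + 1 + 1 - 1 = M + k + 1 from by omega,
      show M + k + 1 - 1 = M + k from by omega,
      ← smul_sub, ← smul_sub]
    congr 1
    ring
  rw [Finset.sum_congr rfl step, Finset.sum_sub_distrib]
  have hshift : (∑ k ∈ range (N + 1),
        (((Nat.factorial (M + k + 1 + 1) : ℚ) / (Nat.factorial k : ℚ) : ℚ) : K) •
          (t 0 (k + 2) * pd 0 (M + k + 1 + 1) q + t 1 (k + 1) * pd 1 (M + k + 1) q))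
      = ∑ k ∈ range (N + 1),
        (if k = 0 then (0 : K)
            else (((Nat.factorial (M + (k - 1) + 1 + 1) : ℚ) / (Nat.factorial (k - 1) : ℚ) : ℚ) : K)) •
          (t 0 (k + 1) * pd 0 (M + k + 1) q + t 1 k * pd 1 (M + k) q) := by
    conv_lhs => rw [Finset.sum_range_succ]
    conv_rhs => rw [Finset.sum_range_succ']
    rw [hq 0 (M + N + 1 + 1) (by omega), hq 1 (M + N + 1) (by omega)]
    rw [if_pos rfl, zero_smul, add_zero, mul_zero, mul_zero, add_zero, smul_zero, add_zero]
    refine Finset.sum_congr rfl fun k _ => ?_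
    rw [if_neg (Nat.succ_ne_zero k)]
    simp only [Nat.add_sub_cancel, show ∀ j : ℕ, M + (j + 1) = M + j + 1 from fun j => by omega,
      show ∀ j : ℕ, j + 1 + 1 = j + 2 from fun j => rfl]
  rw [hshift, ← Finset.sum_sub_distrib, Finset.smul_sum]
  refine Finset.sum_congr rfl fun k hk => ?_
  rw [← sub_smul, smul_smul]
  congr 1
  have hid := cB_id M k
  simp only [show ∀ j : ℕ, M + j + 2 = M + j + 1 + 1 from fun j => rfl] at hid
  exact hid

/-! ### commutator with `Sop` : A-term, `m ≥ 2` -/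

lemma commSA2 (M : ℕ) (q : P) :
    Sop (Aop (M + 2) q) - Aop (M + 2) (Sop q)
      = (-((M : K) + 3)) • Aop (M + 1) q
        + ((2 * (Nat.factorial (M + 1) : ℚ) : ℚ) : K) • (t 0 0 * pd 1 M q) := by
  obtain ⟨N1, h1⟩ := exists_bnd q
  obtain ⟨N2, h2⟩ := exists_bnd (Sop q)
  have hq : Bnd (N1 + N2 + 1) q := h1.mono (by omega)
  have hs : Bnd (N1 + N2 + 1) (Sop q) := h2.mono (by omega)
  set N : ℕ := N1 + N2 with hN
  rw [Aop_eq' (M + 1) hq, Aop_eq' (M + 1) hs, Aop_eq' M hq]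
  simp only [show ∀ k : ℕ, M + 1 + k = M + k + 1 from fun k => by omega]
  rw [Sop_sum, ← Finset.sum_sub_distrib]
  have step : ∀ k ∈ range (N + 1),
      Sop (((2 * alphaC (M + 2) k : ℚ) : K) • (t 0 k * pd 1 (M + k + 1) q))
        - ((2 * alphaC (M + 2) k : ℚ) : K) • (t 0 k * pd 1 (M + k + 1) (Sop q))
      = ((2 * alphaC (M + 2) k : ℚ) : K) • (t 0 (k + 1) * pd 1 (M + k + 1) q)
        - ((2 * alphaC (M + 2) k : ℚ) : K) • (t 0 k * pd 1 (M + k) q) := by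
    intro k _
    rw [Sop_smul, Sop_mul, pd_Sop, if_neg (show ¬ M + k + 1 = 0 by omega),
      show M + k + 1 - 1 = M + k from by omega, ← smul_sub, ← smul_sub]
    congr 1
    ring
  rw [Finset.sum_congr rfl step, Finset.sum_sub_distrib]
  have hshift : (∑ k ∈ range (N + 1),
        ((2 * alphaC (M + 2) k : ℚ) : K) • (t 0 (k + 1) * pd 1 (M + k + 1) q))
      = ∑ k ∈ range (N + 1),
        (if k = 0 then (0 : K) else ((2 * alphaC (M + 2) (k - 1) : ℚ) : K)) •
          (t 0 k * pd 1 (M + k) q) := by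
    conv_lhs => rw [Finset.sum_range_succ]
    conv_rhs => rw [Finset.sum_range_succ']
    rw [hq 1 (M + N + 1) (by omega)]
    rw [if_pos rfl, zero_smul, add_zero, mul_zero, smul_zero, add_zero]
    refine Finset.sum_congr rfl fun k _ => ?_
    rw [if_neg (Nat.succ_ne_zero k)]
    simp only [Nat.add_sub_cancel, show ∀ j : ℕ, M + (j + 1) = M + j + 1 from fun j => by omega]
  rw [hshift, ← Finset.sum_sub_distrib, Finset.smul_sum]
  have hconst : ((2 * (Nat.factorial (M + 1) : ℚ) : ℚ) : K) • (t 0 0 * pd 1 M q)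
      = ∑ k ∈ range (N + 1),
        (if k = 0 then ((2 * (Nat.factorial (M + 1) : ℚ) : ℚ) : K) else 0) •
          (t 0 k * pd 1 (M + k) q) := by
    rw [Finset.sum_eq_single_of_mem 0 (Finset.mem_range.mpr (by omega))]
    · rw [if_pos rfl, add_zero]
    · intro b _ hb
      rw [if_neg hb, zero_smul]
  rw [hconst, ← Finset.sum_add_distrib]
  refine Finset.sum_congr rfl fun k hk => ?_
  rw [← sub_smul, smul_smul, ← add_smul]
  congr 1
  exact cA_id M k

/-! ### commutator with `Sop` : A-term, `m = 1` -/

lemma commSA1 (q : P) :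
    Sop (Aop 1 q) - Aop 1 (Sop q) = (-(2 : K)) • A0op q := by
  obtain ⟨N1, h1⟩ := exists_bnd q
  obtain ⟨N2, h2⟩ := exists_bnd (Sop q)
  have hq : Bnd (N1 + N2) q := h1.mono (by omega)
  have hs : Bnd (N1 + N2) (Sop q) := h2.mono (by omega)
  set N : ℕ := N1 + N2 with hN
  rw [Aop_eq' 0 (hq.mono (Nat.le_succ N)), Aop_eq' 0 (hs.mono (Nat.le_succ N)),
    A0op_eq (hq.mono (Nat.le_succ N))]
  simp only [zero_add]
  rw [Sop_sum, ← Finset.sum_sub_distrib]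
  have step : ∀ k ∈ range (N + 1),
      Sop (((2 * alphaC 1 k : ℚ) : K) • (t 0 k * pd 1 k q))
        - ((2 * alphaC 1 k : ℚ) : K) • (t 0 k * pd 1 k (Sop q))
      = ((2 * alphaC 1 k : ℚ) : K) • (t 0 (k + 1) * pd 1 k q)
        - ((2 * alphaC 1 k : ℚ) : K) •
            (if k = 0 then 0 else t 0 k * pd 1 (k - 1) q) := by
    intro k _
    rw [Sop_smul, Sop_mul, pd_Sop, ← smul_sub, ← smul_sub]
    congr 1
    cases k with
    | zero => simp
    | succ j =>
        rw [if_neg (Nat.succ_ne_zero j), if_neg (Nat.succ_ne_zero j)]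
        ring
  rw [Finset.sum_congr rfl step, Finset.sum_sub_distrib]
  have hshift : (∑ k ∈ range (N + 1),
        ((2 * alphaC 1 k : ℚ) : K) • (if k = 0 then 0 else t 0 k * pd 1 (k - 1) q))
      = ∑ k ∈ range (N + 1), ((2 * alphaC 1 (k + 1) : ℚ) : K) • (t 0 (k + 1) * pd 1 k q) := by
    conv_lhs => rw [Finset.sum_range_succ']
    conv_rhs => rw [Finset.sum_range_succ]
    rw [hq 1 N (le_refl N), mul_zero, smul_zero, add_zero]
    rw [show (if (0 : ℕ) = 0 then (0 : P) else t 0 0 * pd 1 (0 - 1) q) = (0 : P) from rfl,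
      smul_zero, add_zero]
    refine Finset.sum_congr rfl fun k _ => ?_
    rw [if_neg (Nat.succ_ne_zero k)]
    simp only [Nat.add_sub_cancel]
  rw [hshift, ← Finset.sum_sub_distrib, Finset.smul_sum]
  refine Finset.sum_congr rfl fun k hk => ?_
  rw [← sub_smul, smul_smul]
  congr 1
  exact cA1_id k

/-! ### commutator with `Sop` : Q-term -/

lemma commSQ (M : ℕ) (q : P) :
    Sop (Qop (M + 2) q) - Qop (M + 2) (Sop q) = (-((M : K) + 3)) • Qop (M + 1) q := by
  rw [Qop_rep M q, Qop_rep M (Sop q), Qop_rep' M q, Sop_smul, ← smul_sub,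
    smul_comm (-((M : K) + 3)) (eps ^ 2)]
  congr 1
  rw [Sop_sum, ← Finset.sum_sub_distrib]
  have step : ∀ k ∈ range (M + 1),
      Sop (((Nat.factorial (k + 1) * Nat.factorial (M + 1 - k) : ℕ) : K) •
            pd 1 k (pd 1 (M - k) q))
        - ((Nat.factorial (k + 1) * Nat.factorial (M + 1 - k) : ℕ) : K) •
            pd 1 k (pd 1 (M - k) (Sop q))
      = -(((Nat.factorial (k + 1) * Nat.factorial (M + 1 - k) : ℕ) : K) •
            (if k = 0 then 0 else pd 1 (k - 1) (pd 1 (M - k) q)))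
        - ((Nat.factorial (k + 1) * Nat.factorial (M + 1 - k) : ℕ) : K) •
            (if M - k = 0 then 0 else pd 1 k (pd 1 (M - k - 1) q)) := by
    intro k _
    have hite : pd 1 k (if M - k = 0 then 0 else pd 1 (M - k - 1) q)
        = (if M - k = 0 then 0 else pd 1 k (pd 1 (M - k - 1) q)) := by
      rw [apply_ite (pd 1 k), pd_zero]
    rw [Sop_smul, pd_Sop 1 (M - k) q, pd_add, pd_Sop 1 k (pd 1 (M - k) q), hite,
      smul_add, smul_add]
    abel
  rw [Finset.sum_congr rfl step, Finset.sum_sub_distrib]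
  have hP1 : (∑ k ∈ range (M + 1),
        -(((Nat.factorial (k + 1) * Nat.factorial (M + 1 - k) : ℕ) : K) •
            (if k = 0 then 0 else pd 1 (k - 1) (pd 1 (M - k) q))))
      = ∑ k ∈ range M,
        -(((Nat.factorial (k + 2) * Nat.factorial (M - k) : ℕ) : K) •
            pd 1 k (pd 1 (M - k - 1) q)) := by
    conv_lhs => rw [Finset.sum_range_succ']
    rw [show (if (0 : ℕ) = 0 then (0 : P) else pd 1 (0 - 1) (pd 1 (M - 0) q)) = (0 : P) from rfl,
      smul_zero, neg_zero, add_zero]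
    refine Finset.sum_congr rfl fun k _ => ?_
    rw [if_neg (Nat.succ_ne_zero k)]
    simp only [Nat.add_sub_cancel,
      show ∀ j : ℕ, M + 1 - (j + 1) = M - j from fun j => by omega,
      show ∀ j : ℕ, M - (j + 1) = M - j - 1 from fun j => by omega,
      show ∀ j : ℕ, j + 1 + 1 = j + 2 from fun j => rfl]
  have hP2 : (∑ k ∈ range (M + 1),
        ((Nat.factorial (k + 1) * Nat.factorial (M + 1 - k) : ℕ) : K) •
          (if M - k = 0 then 0 else pd 1 k (pd 1 (M - k - 1) q)))
      = ∑ k ∈ range M,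
        ((Nat.factorial (k + 1) * Nat.factorial (M + 1 - k) : ℕ) : K) •
          pd 1 k (pd 1 (M - k - 1) q) := by
    conv_lhs => rw [Finset.sum_range_succ]
    rw [if_pos (by omega : M - M = 0), smul_zero, add_zero]
    refine Finset.sum_congr rfl fun k hk => ?_
    have hk' : k < M := Finset.mem_range.mp hk
    rw [if_neg (by omega : ¬ M - k = 0)]
  rw [hP1, hP2, Finset.smul_sum, ← Finset.sum_sub_distrib]
  refine Finset.sum_congr rfl fun k hk => ?_
  have hk' : k < M := Finset.mem_range.mp hk
  rw [smul_smul, ← neg_smul, ← sub_smul]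
  congr 1
  have hnat := cQ_id M k (by omega)
  have hcast : ((Nat.factorial (k + 2) * Nat.factorial (M - k) : ℕ) : K)
      + ((Nat.factorial (k + 1) * Nat.factorial (M + 1 - k) : ℕ) : K)
      = ((M : K) + 3) * ((Nat.factorial (k + 1) * Nat.factorial (M - k) : ℕ) : K) := by
    rw [show ((M : K) + 3) = (((M + 3 : ℕ) : K)) from by push_cast; ring, ← Nat.cast_mul,
      ← Nat.cast_add, hnat]
  rw [show (-(((Nat.factorial (k + 2) * Nat.factorial (M - k) : ℕ) : K))
      - ((Nat.factorial (k + 1) * Nat.factorial (M + 1 - k) : ℕ) : K))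
      = -(((Nat.factorial (k + 2) * Nat.factorial (M - k) : ℕ) : K)
        + ((Nat.factorial (k + 1) * Nat.factorial (M + 1 - k) : ℕ) : K)) from by ring, hcast]
  ring


/-! ### commutators with the multiplication part `Mop` -/

lemma commMB (m : ℕ) (q : P) : Mop (Bop (m + 1) q) = Bop (m + 1) (Mop q) := by
  obtain ⟨N1, h1⟩ := exists_bnd q
  obtain ⟨N2, h2⟩ := exists_bnd (Mop q)
  have hq : Bnd (N1 + N2) q := h1.mono (by omega)
  have hm : Bnd (N1 + N2) (Mop q) := h2.mono (by omega)
  rw [Bop_eq (m + 1) hq, Bop_eq (m + 1) hm, Mop_sum]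
  refine Finset.sum_congr rfl fun k _ => ?_
  rw [Mop_smul, Mop_add, Mop_mul, Mop_mul,
    pd_Mop (show m + 1 + k + 1 ≠ 0 by omega) q, pd_Mop (show m + 1 + k ≠ 0 by omega) q]

lemma commMA2 (m : ℕ) (q : P) : Mop (Aop (m + 2) q) = Aop (m + 2) (Mop q) := by
  obtain ⟨N1, h1⟩ := exists_bnd q
  obtain ⟨N2, h2⟩ := exists_bnd (Mop q)
  have hq : Bnd (N1 + N2) q := h1.mono (by omega)
  have hm : Bnd (N1 + N2) (Mop q) := h2.mono (by omega)
  rw [Aop_eq' (m + 1) hq, Aop_eq' (m + 1) hm, Mop_sum]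
  refine Finset.sum_congr rfl fun k _ => ?_
  rw [Mop_smul, Mop_mul, pd_Mop (show m + 1 + k ≠ 0 by omega) q]

lemma commMA1 (q : P) :
    Mop (Aop 1 q) - Aop 1 (Mop q) = (-(2 : K)) • M0op q := by
  obtain ⟨N1, h1⟩ := exists_bnd q
  obtain ⟨N2, h2⟩ := exists_bnd (Mop q)
  have hq : Bnd (N1 + N2 + 1) q := h1.mono (by omega)
  have hm : Bnd (N1 + N2 + 1) (Mop q) := h2.mono (by omega)
  rw [Aop_eq' 0 hq, Aop_eq' 0 hm, Mop_sum, ← Finset.sum_sub_distrib]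
  simp only [zero_add]
  rw [Finset.sum_eq_single_of_mem 0 (Finset.mem_range.mpr (by omega))]
  · have ha : ((2 * alphaC 1 0 : ℚ) : K) = 2 := by
      unfold alphaC
      rw [if_pos rfl]
      norm_num [Nat.factorial_one]
    rw [ha, Mop_smul, Mop_mul, pd10_Mop, mul_add, smul_add, mul_smul_comm, ← mul_assoc]
    unfold M0op
    rw [neg_smul]
    abel
  · intro b _ hb
    rw [Mop_smul, Mop_mul, pd_Mop hb q, sub_self]

lemma commMQ (M : ℕ) (q : P) :
    Mop (Qop (M + 2) q) - Qop (M + 2) (Mop q)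
      = -(((2 * (Nat.factorial (M + 1) : ℚ) : ℚ) : K) • (t 0 0 * pd 1 M q)) := by
  rw [Qop_rep M q, Qop_rep M (Mop q), Mop_smul, Mop_sum, ← smul_sub, ← Finset.sum_sub_distrib]
  have step : ∀ k ∈ range (M + 1),
      Mop (((Nat.factorial (k + 1) * Nat.factorial (M + 1 - k) : ℕ) : K) •
            pd 1 k (pd 1 (M - k) q))
        - ((Nat.factorial (k + 1) * Nat.factorial (M + 1 - k) : ℕ) : K) •
            pd 1 k (pd 1 (M - k) (Mop q))
      = -(eps⁻¹ ^ 2 • (((Nat.factorial (k + 1) * Nat.factorial (M + 1 - k) : ℕ) : K) •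
            (t 0 0 * ((if M - k = 0 then pd 1 k q else 0)
              + (if k = 0 then pd 1 (M - k) q else 0))))) := by
    intro k _
    rw [Mop_smul, pdpd_Mop, smul_add, smul_comm _ (eps⁻¹ ^ 2)]
    abel
  rw [Finset.sum_congr rfl step]
  rw [Finset.sum_neg_distrib, ← Finset.smul_sum, smul_neg, smul_smul, ← mul_pow,
    mul_inv_cancel₀ (show eps ≠ 0 from RatFunc.X_ne_zero), one_pow, one_smul]
  congr 1
  -- now: ∑ c k • (t00 * (ite1 + ite2)) = const • (t00 * pd 1 M q)
  simp only [mul_add, smul_add]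
  rw [Finset.sum_add_distrib]
  have hZ1 : (∑ k ∈ range (M + 1),
        ((Nat.factorial (k + 1) * Nat.factorial (M + 1 - k) : ℕ) : K) •
          (t 0 0 * (if M - k = 0 then pd 1 k q else 0)))
      = ((Nat.factorial (M + 1) * Nat.factorial 1 : ℕ) : K) • (t 0 0 * pd 1 M q) := by
    rw [Finset.sum_eq_single_of_mem M (Finset.mem_range.mpr (by omega))]
    · rw [if_pos (by omega : M - M = 0), show M + 1 - M = 1 from by omega]
    · intro b hb hbne
      have : b < M + 1 := Finset.mem_range.mp hb
      rw [if_neg (by omega : ¬ M - b = 0), mul_zero, smul_zero]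
  have hZ2 : (∑ k ∈ range (M + 1),
        ((Nat.factorial (k + 1) * Nat.factorial (M + 1 - k) : ℕ) : K) •
          (t 0 0 * (if k = 0 then pd 1 (M - k) q else 0)))
      = ((Nat.factorial 1 * Nat.factorial (M + 1) : ℕ) : K) • (t 0 0 * pd 1 M q) := by
    rw [Finset.sum_eq_single_of_mem 0 (Finset.mem_range.mpr (by omega))]
    · rw [if_pos rfl, show (0 : ℕ) + 1 = 1 from rfl, show M + 1 - 0 = M + 1 from rfl,
        show M - 0 = M from rfl]
    · intro b _ hbne
      rw [if_neg hbne, mul_zero, smul_zero]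
  rw [hZ1, hZ2, ← add_smul]
  congr 1
  push_cast [Nat.factorial_one]
  ring

/-! ### `Bop 0` agrees with the B-part of `L0` -/

lemma Bop_zero_eq (q : P) : Bop 0 q = B0op q := by
  obtain ⟨N, h⟩ := exists_bnd q
  rw [Bop_eq 0 h, B0op_eq h]
  refine Finset.sum_congr rfl fun k _ => ?_
  simp only [Nat.zero_add, zero_add]
  congr 1
  rw [Nat.factorial_succ]
  have h1 : (Nat.factorial k : ℚ) ≠ 0 := hfacQ k
  rw [show (((k + 1) * Nat.factorial k : ℕ) : ℚ) = ((k : ℚ) + 1) * (Nat.factorial k : ℚ)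
      from by push_cast; ring]
  rw [mul_div_assoc, div_self h1, mul_one]
  push_cast
  ring


/-! ### assembly -/

lemma expand_comm (m' : ℕ) (q : P) : Lneg1 (Lpos m' q) - Lpos m' (Lneg1 q)
    = (Sop (Qop m' q) - Qop m' (Sop q)) + ((Sop (Bop m' q) - Bop m' (Sop q))
      + ((Sop (Aop m' q) - Aop m' (Sop q)) + ((Mop (Qop m' q) - Qop m' (Mop q))
      + ((Mop (Bop m' q) - Bop m' (Mop q)) + (Mop (Aop m' q) - Aop m' (Mop q)))))) := by
  rw [Lneg1_eq, Lpos_eq, Lpos_eq, Lneg1_eq]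
  rw [Sop_add, Sop_add, Mop_add, Mop_add, Qop_add, Bop_add, Aop_add]
  abel


/-- The Virasoro commutation relation `[L_{-1}, L_m] = −(m+1) L_{m−1}` for every `m ≥ 1`,
as operators on `P`. -/
theorem virasoro_comm_neg_one_m (m : ℕ) (hm : 1 ≤ m) (q : P) :
    Lneg1 (Lpos m q) - Lpos m (Lneg1 q) = (-((m : K) + 1)) • Lfam (m - 1) q := by
  obtain ⟨M, rfl⟩ : ∃ M, m = M + 1 := ⟨m - 1, by omega⟩
  rw [expand_comm]
  cases M with
  | zero =>
      simp only [zero_add]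
      have hB := commSB 0 q
      simp only [Nat.cast_zero, zero_add] at hB
      rw [Bop_zero_eq q] at hB
      have hMB := commMB 0 q
      simp only [zero_add] at hMB
      simp only [Qop_one, Sop_zero, Mop_zero]
      rw [hB, commSA1 q, hMB, sub_self, commMA1 q]
      rw [show (1 : ℕ) - 1 = 0 from rfl]
      show _ = (-(((1 : ℕ) : K) + 1)) • L0 q
      rw [L0_eq q, show (-(((1 : ℕ) : K) + 1)) = (-(2 : K)) from by norm_num,
        smul_add, smul_add]
      abel
  | succ M' =>
      simp only [show M' + 1 + 1 = M' + 2 from rfl]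
      have hQ := commSQ M' q
      have hB := commSB (M' + 1) q
      simp only [show M' + 1 + 1 = M' + 2 from rfl] at hB
      have hA := commSA2 M' q
      have hMQ := commMQ M' q
      have hMB := commMB (M' + 1) q
      simp only [show M' + 1 + 1 = M' + 2 from rfl] at hMB
      have hMA := commMA2 M' q
      rw [hQ, hB, hA, hMQ, hMB, sub_self, hMA, sub_self]
      rw [show (M' + 2 : ℕ) - 1 = M' + 1 from rfl]
      show _ = (-(((M' + 2 : ℕ) : K) + 1)) • Lpos (M' + 1) q
      rw [Lpos_eq]
      rw [show (-((((M' + 1 : ℕ)) : K) + 2)) = (-((M' : K) + 3)) from by push_cast; ring,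
        show (-(((M' + 2 : ℕ) : K) + 1)) = (-((M' : K) + 3)) from by push_cast; ring,
        smul_add, smul_add]
      abel

end ExtendedToda
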